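/- For every finite game graph G with static hierarchical information and every winning condition W ⊆ V^ω, there exist a finite game graph G' whose positions are V × M for some finite set M (with the same players and action sets, and with enlarged observation alphabets) that yields hierarchical observation, and a winning condition W' ⊆ (V × M)^ω consisting of the sequences whose V-components lie in W, such that G admits a distributed winning strategy for W if and only if G' admits a distributed winning strategy for W', and G admits a finite-state distributed winning strategy for W if and only if G' admits a finite-state distributed winning strategy for W'. -/

import Mathlib

/-- A finite game graph for `n` players: positions `V` with initial position `init`,
action sets `A i`, observation sets `B i`, a move relation labelled by action
profiles (with no dead ends), and observation functions. -/
structure GameGraph (n : ℕ) (V : Type) (A : Fin n → Type) (B : Fin n → Type) where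
  init : V
  move : V → (∀ i, A i) → V → Prop
  noDeadEnd : ∀ v a, ∃ w, move v a w
  obs : ∀ i : Fin n, V → B i

/-- A Moore machine with finite state set `Q`, input alphabet `σ`, output alphabet `γ`. -/
structure Moore (σ γ : Type) where
  Q : Type
  finQ : Fintype Q
  q0 : Q
  δ : Q → σ → Q
  out : Q → γ

namespace Moore

/-- The output letter of a Moore machine after reading a word. -/
def output {σ γ : Type} (mc : Moore σ γ) (w : List σ) : γ :=
  mc.out (w.foldl mc.δ mc.q0)

/-- The output word of a Moore machine along a word: the `k`-th letter is the
output after reading the prefix of length `k+1`. -/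
def outWord {σ γ : Type} (mc : Moore σ γ) (w : List σ) : List γ :=
  ((w.scanl mc.δ mc.q0).drop 1).map mc.out

end Moore

/-- A deterministic parity automaton over alphabet `α`. -/
structure ParityAut (α : Type) where
  Q : Type
  finQ : Fintype Q
  q0 : Q
  δ : Q → α → Q
  prio : Q → ℕ

namespace ParityAut

/-- The run of a deterministic parity automaton on an infinite word. -/
def run {α : Type} (d : ParityAut α) (f : ℕ → α) : ℕ → d.Q
  | 0 => d.q0
  | t + 1 => d.δ (run d f t) (f t)

/-- Parity acceptance: the least priority occurring infinitely often is even. -/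
def Accepts {α : Type} (d : ParityAut α) (f : ℕ → α) : Prop :=
  Even (sInf { p | ∃ᶠ t in Filter.atTop, d.prio (d.run f t) = p })

end ParityAut

/-- A deterministic Büchi automaton over alphabet `α` with state set `σ`. -/
structure DetBuchi (α σ : Type) where
  q0 : σ
  δ : σ → α → σ
  accept : Set σ

namespace DetBuchi

/-- The run of a deterministic Büchi automaton on an infinite word. -/
def run {α σ : Type} (d : DetBuchi α σ) (f : ℕ → α) : ℕ → σ
  | 0 => d.q0
  | t + 1 => d.δ (run d f t) (f t)

/-- Büchi acceptance: the run visits accepting states infinitely often. -/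
def Accepts {α σ : Type} (d : DetBuchi α σ) (f : ℕ → α) : Prop :=
  ∃ᶠ t in Filter.atTop, d.run f t ∈ d.accept

end DetBuchi

namespace GameGraph

variable {n : ℕ} {V : Type} {A B : Fin n → Type}

/-- Two positions are linked by a move (for some action profile). -/
def step (G : GameGraph n V A B) (u w : V) : Prop := ∃ a, G.move u a w

/-- A history: a nonempty sequence starting at the initial position, each
consecutive pair lying on a move. -/
def IsHistory (G : GameGraph n V A B) (π : List V) : Prop :=
  π.head? = some G.init ∧ π.Chain' G.step

/-- The observation sequence of player `i` along a history (the observation at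
the initial position is discarded). -/
def obsSeq (G : GameGraph n V A B) (i : Fin n) (π : List V) : List (B i) :=
  (π.drop 1).map (G.obs i)

/-- Histories are indistinguishable for player `i` if they yield the same observations. -/
def Indist (G : GameGraph n V A B) (i : Fin n) (π π' : List V) : Prop :=
  G.obsSeq i π = G.obsSeq i π'

/-- The information set of player `i` at history `π`. -/
def InfoSet (G : GameGraph n V A B) (i : Fin n) (π : List V) : Set (List V) :=
  { π' | G.IsHistory π' ∧ G.Indist i π π' }

/-- A history yields hierarchical information if the information sets of players
are totally ordered by inclusion. -/
def HistHI (G : GameGraph n V A B) (π : List V) : Prop :=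
  ∀ i j : Fin n, G.InfoSet i π ⊆ G.InfoSet j π ∨ G.InfoSet j π ⊆ G.InfoSet i π

/-- Static hierarchical information: there is a total order of the players such
that along every history, the information sets respect this order. -/
def StaticHI (G : GameGraph n V A B) : Prop :=
  ∃ ord : Fin n → Fin n → Prop, IsLinearOrder (Fin n) ord ∧
    ∀ i j : Fin n, ord i j → ∀ π, G.IsHistory π → G.InfoSet i π ⊆ G.InfoSet j π

/-- Hierarchical observation: there is a total order of the players such that
the observation of a smaller player determines that of a bigger player, positionally. -/
def HierObs (G : GameGraph n V A B) : Prop :=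
  ∃ ord : Fin n → Fin n → Prop, IsLinearOrder (Fin n) ord ∧
    ∀ i j : Fin n, ord i j → ∀ v v' : V, G.obs i v = G.obs i v' → G.obs j v = G.obs j v'

/-- Dynamic hierarchical information: every history yields hierarchical information. -/
def DynamicHI (G : GameGraph n V A B) : Prop := ∀ π, G.IsHistory π → G.HistHI π

/-- The prefix `v₀ … v_t` of a play, as a list. -/
def playPrefix (f : ℕ → V) (t : ℕ) : List V := (List.range (t + 1)).map f

/-- A play: an infinite sequence all of whose prefixes are histories. -/
def IsPlay (G : GameGraph n V A B) (f : ℕ → V) : Prop :=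
  ∀ t, G.IsHistory (playPrefix f t)

/-- A play yields recurring hierarchical information if infinitely many of its
prefix histories yield hierarchical information. -/
def PlayRecurringHI (G : GameGraph n V A B) (f : ℕ → V) : Prop :=
  ∀ T, ∃ t, T ≤ t ∧ G.HistHI (playPrefix f t)

/-- A game yields recurring hierarchical information if every play does. -/
def RecurringHI (G : GameGraph n V A B) : Prop :=
  ∀ f, G.IsPlay f → G.PlayRecurringHI f

/-- `[t, t+ℓ]` is a gap of the play `f`: no prefix of length `r ∈ [t, t+ℓ]` yields
hierarchical information.  The length of this gap is `ℓ + 1`. -/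
def IsGap (G : GameGraph n V A B) (f : ℕ → V) (t ℓ : ℕ) : Prop :=
  ∀ r, t ≤ r → r ≤ t + ℓ → ¬ G.HistHI (playPrefix f r)

/-- Information-consistency of a strategy profile: each component is constant on
indistinguishability classes of histories. -/
def Consistent (G : GameGraph n V A B) (s : ∀ i, List V → A i) : Prop :=
  ∀ (i : Fin n) (π π' : List V),
    G.IsHistory π → G.IsHistory π' → G.Indist i π π' → s i π = s i π'

/-- A play follows a strategy profile. -/
def Follows (G : GameGraph n V A B) (s : ∀ i, List V → A i) (f : ℕ → V) : Prop :=
  f 0 = G.init ∧ ∀ t, ∃ a, G.move (f t) a (f (t + 1)) ∧ ∀ i, a i = s i (playPrefix f t)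

/-- A distributed winning strategy for winning condition `W`: an information-consistent
profile all of whose outcomes lie in `W`. -/
def WinningProfile (G : GameGraph n V A B) (W : Set (ℕ → V)) (s : ∀ i, List V → A i) : Prop :=
  G.Consistent s ∧ ∀ f, G.Follows s f → f ∈ W

/-- A finite-state strategy for player `i`: implemented by a Moore machine reading
the observation sequence of the history. -/
def FinStateStrategy (G : GameGraph n V A B) (i : Fin n) (si : List V → A i) : Prop :=
  ∃ mc : Moore (B i) (A i), ∀ π, G.IsHistory π → si π = mc.output (G.obsSeq i π)

/-- The game admits a distributed winning strategy for `W`. -/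
def HasDWS (G : GameGraph n V A B) (W : Set (ℕ → V)) : Prop :=
  ∃ s : ∀ i, List V → A i, G.WinningProfile W s

/-- The game admits a finite-state distributed winning strategy for `W`. -/
def HasFinDWS (G : GameGraph n V A B) (W : Set (ℕ → V)) : Prop :=
  ∃ s : ∀ i, List V → A i, G.WinningProfile W s ∧ ∀ i, G.FinStateStrategy i (s i)

/-- `i ⪯_π j` : at history `π`, player `i` is at least as informed as player `j`. -/
def infoLE (G : GameGraph n V A B) (π : List V) (i j : Fin n) : Prop :=
  G.InfoSet i π ⊆ G.InfoSet j π

/-- The information rank of player `i` at history `π`: the number of players `j`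
with `j ≺_π i`, or with `j < i` and `j ≈_π i`. -/
noncomputable def rank (G : GameGraph n V A B) (i : Fin n) (π : List V) : ℕ :=
  Nat.card {j : Fin n //
    (G.infoLE π j i ∧ ¬ G.infoLE π i j) ∨ (j < i ∧ G.infoLE π j i ∧ G.infoLE π i j)}

/-- The signal `λ_j^i`: the set of observations of player `i` at the last positions of
histories in the information set of player `j`. -/
def lam (G : GameGraph n V A B) (i j : Fin n) (π : List V) : Set (B i) :=
  { b | ∃ π', π' ∈ G.InfoSet j π ∧ ∃ v, π'.getLast? = some v ∧ G.obs i v = b }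

/-- Players `i` and `j` cross at stage `ℓ` of the play `f`. -/
def Crossing (G : GameGraph n V A B) (f : ℕ → V) (ℓ : ℕ) (i j : Fin n) : Prop :=
  G.InfoSet i (playPrefix f ℓ) ⊂ G.InfoSet j (playPrefix f ℓ) ∧
  G.InfoSet j (playPrefix f (ℓ + 1)) ⊂ G.InfoSet i (playPrefix f (ℓ + 1))

/-- A game is cross-free if no two players cross at any stage of any play. -/
def CrossFree (G : GameGraph n V A B) : Prop :=
  ∀ f, G.IsPlay f → ∀ (ℓ : ℕ) (i j : Fin n), ¬ G.Crossing f ℓ i j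


noncomputable section Construction

open List

open scoped Classical

variable {n : ℕ} {V : Type} {A B : Fin n → Type}

theorem isHistory_ne_nil {G : GameGraph n V A B} {π : List V} (h : G.IsHistory π) : π ≠ [] := by
  rintro rfl; simp [IsHistory] at h

theorem isHistory_concat {G : GameGraph n V A B} {π : List V} {v : V} :
    G.IsHistory (π ++ [v]) ↔
      (π = [] ∧ v = G.init) ∨
      (G.IsHistory π ∧ ∃ u, π.getLast? = some u ∧ G.step u v) := by
  constructor
  · rintro ⟨h1, h2⟩
    rcases eq_or_ne π [] with rfl | hne
    · left
      simp only [List.nil_append, List.head?_cons, Option.some.injEq] at h1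
      exact ⟨rfl, h1⟩
    · right
      unfold List.Chain' at h2
      rw [List.isChain_append] at h2
      rw [List.head?_append, List.head?_eq_head hne] at h1
      refine ⟨⟨by rw [List.head?_eq_head hne]; simpa using h1, h2.1⟩,
        π.getLast hne, List.getLast?_eq_getLast hne, ?_⟩
      exact h2.2.2 _ (List.getLast?_eq_getLast hne) v rfl
  · rintro (⟨rfl, rfl⟩ | ⟨⟨h1, h2⟩, u, hu, hstep⟩)
    · exact ⟨rfl, List.isChain_singleton _⟩
    · have hne : π ≠ [] := by rintro rfl; simp at hu
      refine ⟨?_, ?_⟩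
      · rw [List.head?_append, List.head?_eq_head hne] at *
        simpa using h1
      · unfold List.Chain'
        rw [List.isChain_append]
        refine ⟨h2, List.isChain_singleton _, ?_⟩
        intro x hx y hy
        rw [hu] at hx
        simp only [Option.mem_def, Option.some.injEq] at hx
        simp only [List.head?_cons, Option.mem_def, Option.some.injEq] at hy
        subst hx; subst hy; exact hstep

theorem obsSeq_concat {G : GameGraph n V A B} (i : Fin n) {π : List V} (hne : π ≠ []) (v : V) :
    G.obsSeq i (π ++ [v]) = G.obsSeq i π ++ [G.obs i v] := by
  unfold obsSeq
  rw [List.drop_append_of_le_length (List.length_pos_iff.2 hne), List.map_append]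
  rfl

theorem obsSeq_eq_nil_iff {G : GameGraph n V A B} (i : Fin n) {π : List V} :
    G.obsSeq i π = [] ↔ π.drop 1 = [] := by
  simp only [obsSeq, List.map_eq_nil_iff]

theorem obsSeq_getLast {G : GameGraph n V A B} (i : Fin n) {π : List V} {v : V}
    (hv : π.getLast? = some v) (hne : G.obsSeq i π ≠ []) :
    (G.obsSeq i π).getLast? = some (G.obs i v) := by
  rcases List.eq_nil_or_concat π with rfl | ⟨π₀, u, rfl⟩
  · simp at hv
  · rw [List.concat_eq_append] at *
    rw [List.getLast?_concat] at hv
    have huv : u = v := by simpa using hv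
    subst huv
    have hπ₀ : π₀ ≠ [] := by
      rintro rfl
      exact hne (by simp [obsSeq])
    rw [obsSeq_concat i hπ₀, List.getLast?_concat]

/-- Belief update of player `i`: possible next positions after observing `b`. -/
def upd (G : GameGraph n V A B) (i : Fin n) (S : Set V) (b : B i) : Set V :=
  {w | ∃ v ∈ S, G.step v w ∧ G.obs i w = b}

/-- The set of possible current positions after player `i` observed the word `w`. -/
def reach (G : GameGraph n V A B) (i : Fin n) (w : List (B i)) : Set V :=
  {v | ∃ π, G.IsHistory π ∧ G.obsSeq i π = w ∧ π.getLast? = some v}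

theorem reach_nil (G : GameGraph n V A B) (i : Fin n) : G.reach i [] = {G.init} := by
  ext v
  constructor
  · rintro ⟨π, ⟨h1, h2⟩, hobs, hlast⟩
    cases π with
    | nil => simp at h1
    | cons a t =>
      have hat : a = G.init := by simpa using h1
      have ht : t = [] := by simpa [obsSeq] using hobs
      subst hat; subst ht
      simpa using hlast.symm
  · rintro rfl
    exact ⟨[G.init], ⟨rfl, List.isChain_singleton _⟩, by simp [obsSeq], by simp⟩

theorem reach_concat (G : GameGraph n V A B) (i : Fin n) (w : List (B i)) (b : B i) :
    G.reach i (w ++ [b]) = G.upd i (G.reach i w) b := by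
  ext x
  constructor
  · rintro ⟨π, hπ, hobs, hlast⟩
    rcases List.eq_nil_or_concat π with rfl | ⟨π₀, u, rfl⟩
    · exact absurd rfl (isHistory_ne_nil hπ)
    · rw [List.concat_eq_append] at *
      rw [List.getLast?_concat] at hlast
      have hux : u = x := by simpa using hlast
      subst hux
      have hπ₀ : π₀ ≠ [] := by
        rintro rfl
        simp only [List.nil_append] at hobs
        have : G.obsSeq i [u] = [] := by simp [obsSeq]
        rw [this] at hobs
        exact absurd hobs.symm (by simp)
      rw [obsSeq_concat i hπ₀] at hobs
      obtain ⟨hw, hb⟩ := List.append_inj' hobs (by simp)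
      rcases isHistory_concat.mp hπ with ⟨rfl, _⟩ | ⟨h₀, u₀, hu₀, hstep⟩
      · exact absurd rfl hπ₀
      · exact ⟨u₀, ⟨π₀, h₀, hw, hu₀⟩, hstep, by simpa using hb⟩
  · rintro ⟨u, ⟨π₀, h₀, hw, hu⟩, hstep, hb⟩
    refine ⟨π₀ ++ [x], isHistory_concat.mpr (Or.inr ⟨h₀, u, hu, hstep⟩), ?_, List.getLast?_concat⟩
    rw [obsSeq_concat i (isHistory_ne_nil h₀), hw, hb]

theorem foldl_upd (G : GameGraph n V A B) (i : Fin n) (w : List (B i)) :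
    w.foldl (G.upd i) {G.init} = G.reach i w := by
  induction w using List.reverseRecOn with
  | nil => exact (reach_nil G i).symm
  | append_singleton w₀ b ih =>
    rw [List.foldl_append, reach_concat]
    simp [ih]

/-- Along histories, the observation of any less-informed player `k` at the endpoint
is determined by the observation word of player `i`. -/
theorem reach_obs {G : GameGraph n V A B} {ord : Fin n → Fin n → Prop}
    (hsub : ∀ i j : Fin n, ord i j → ∀ π, G.IsHistory π → G.InfoSet i π ⊆ G.InfoSet j π)
    {i k : Fin n} (hik : ord i k) {π : List V} {v : V}
    (hπ : G.IsHistory π) (hv : π.getLast? = some v) (hne : G.obsSeq i π ≠ [])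
    {u : V} (hu : u ∈ G.reach i (G.obsSeq i π)) :
    G.obs k u = G.obs k v := by
  obtain ⟨σ, hσ, hobs, hlast⟩ := hu
  have hmem : σ ∈ G.InfoSet k π := hsub i k hik π hπ ⟨hσ, hobs.symm⟩
  have hind : G.obsSeq k π = G.obsSeq k σ := hmem.2
  have hlen : ∀ j : Fin n, G.obsSeq j π ≠ [] := by
    intro j
    rw [Ne, obsSeq_eq_nil_iff]
    rw [Ne, obsSeq_eq_nil_iff] at hne
    exact hne
  have hlenσ : G.obsSeq k σ ≠ [] := by
    rw [← hind]; exact hlen k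
  have h1 := obsSeq_getLast k hv (hlen k)
  have h2 := obsSeq_getLast k hlast hlenσ
  rw [hind, h2] at h1
  exact Option.some.inj h1

section Ext

variable (G : GameGraph n V A B) (ord : Fin n → Fin n → Prop)

/-- The enlarged observation: player `i` observes the observations of all players
`k` with `ord i k`. -/
def extObs (i : Fin n) (v : V) : ∀ k : Fin n, Option (B k) :=
  fun k => if ord i k then some (G.obs k v) else none

/-- The expanded game graph, with positions `V × Unit` and enlarged observations. -/
def extG : GameGraph n (V × Unit) A (fun _ => ∀ k : Fin n, Option (B k)) where
  init := (G.init, ())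
  move p a q := G.move p.1 a q.1
  noDeadEnd p a := (G.noDeadEnd p.1 a).elim fun w hw => ⟨(w, ()), hw⟩
  obs i p := G.extObs ord i p.1

theorem extG_obs (i : Fin n) (p : V × Unit) : (G.extG ord).obs i p = G.extObs ord i p.1 := rfl

theorem extG_init : (G.extG ord).init = (G.init, ()) := rfl

theorem extG_step (p q : V × Unit) : (G.extG ord).step p q ↔ G.step p.1 q.1 := Iff.rfl

/-- Lift a sequence of `G`-positions to the expanded game. -/
def liftL (π : List V) : List (V × Unit) := π.map (fun v => (v, ()))

theorem proj_liftL (π : List V) : (liftL π).map Prod.fst = π := by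
  rw [liftL, List.map_map]
  exact List.map_id'' (fun v => rfl) π

theorem liftL_proj (π' : List (V × Unit)) : liftL (π'.map Prod.fst) = π' := by
  rw [liftL, List.map_map]
  exact List.map_id'' (fun p => rfl) π'

theorem liftL_ne_nil {π : List V} (h : π ≠ []) : liftL π ≠ [] := by
  simpa [liftL] using h

theorem liftL_concat (π : List V) (v : V) : liftL (π ++ [v]) = liftL π ++ [(v, ())] := by
  simp [liftL]

theorem ext_isHistory_iff (π' : List (V × Unit)) :
    (G.extG ord).IsHistory π' ↔ G.IsHistory (π'.map Prod.fst) := by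
  constructor
  · rintro ⟨h1, h2⟩
    refine ⟨?_, ?_⟩
    · rw [List.head?_map, h1]; rfl
    · unfold List.Chain' at h2 ⊢; rw [List.isChain_map]; exact h2
  · rintro ⟨h1, h2⟩
    refine ⟨?_, ?_⟩
    · rw [List.head?_map] at h1
      cases π' with
      | nil => simp at h1
      | cons p t =>
        simp only [List.head?_cons, Option.map_some, Option.some.injEq] at h1
        simp only [List.head?_cons, extG_init, Option.some.injEq]
        exact Prod.ext h1 rfl
    · unfold List.Chain' at h2 ⊢; rw [List.isChain_map] at h2; exact h2

theorem ext_obsSeq (i : Fin n) (π' : List (V × Unit)) :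
    (G.extG ord).obsSeq i π' = ((π'.map Prod.fst).drop 1).map (G.extObs ord i) := by
  unfold obsSeq
  rw [← List.map_drop, List.map_map]
  rfl

theorem ext_obsSeq_lift (i : Fin n) (π : List V) :
    (G.extG ord).obsSeq i (liftL π) = (π.drop 1).map (G.extObs ord i) := by
  rw [ext_obsSeq, proj_liftL]

theorem ext_indist_proj {i : Fin n} (hrefl : ord i i) {π' σ' : List (V × Unit)}
    (h : (G.extG ord).Indist i π' σ') :
    G.Indist i (π'.map Prod.fst) (σ'.map Prod.fst) := by
  unfold Indist at h ⊢
  have h2 := congrArg (List.map (fun b : ∀ k, Option (B k) => b i)) h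
  rw [ext_obsSeq, ext_obsSeq, List.map_map, List.map_map] at h2
  have key : ((fun b : ∀ k, Option (B k) => b i) ∘ G.extObs ord i)
      = (some ∘ G.obs i) := by
    funext v
    simp [extObs, hrefl]
  rw [key] at h2
  unfold obsSeq
  have h3 : Function.Injective (some : B i → Option (B i)) := fun a b => Option.some.inj
  have := List.map_injective_iff.mpr h3
  apply this
  simpa [← List.map_map] using h2

theorem map_extObs_eq {i : Fin n} :
    ∀ (l₁ l₂ : List V), l₁.length = l₂.length →
      (∀ k, ord i k → l₁.map (G.obs k) = l₂.map (G.obs k)) →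
      l₁.map (G.extObs ord i) = l₂.map (G.extObs ord i)
  | [], [], _, _ => rfl
  | [], _ :: _, h, _ => by simp at h
  | _ :: _, [], h, _ => by simp at h
  | a :: l₁, b :: l₂, h, hk => by
    simp only [List.map_cons, List.cons.injEq]
    constructor
    · funext k
      by_cases hkk : ord i k
      · have := hk k hkk
        simp only [List.map_cons, List.cons.injEq] at this
        simp [extObs, hkk, this.1]
      · simp [extObs, hkk]
    · refine map_extObs_eq l₁ l₂ (by simpa using h) (fun k hkk => ?_)
      have := hk k hkk
      simp only [List.map_cons, List.cons.injEq] at this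
      exact this.2

theorem ext_indist_lift
    (hsub : ∀ i j : Fin n, ord i j → ∀ π, G.IsHistory π → G.InfoSet i π ⊆ G.InfoSet j π)
    {i : Fin n} {π σ : List V} (hπ : G.IsHistory π) (hσ : G.IsHistory σ)
    (h : G.Indist i π σ) :
    (G.extG ord).Indist i (liftL π) (liftL σ) := by
  unfold Indist
  rw [ext_obsSeq_lift, ext_obsSeq_lift]
  have hlen : (π.drop 1).length = (σ.drop 1).length := by
    have := congrArg List.length h
    simpa [Indist, obsSeq] using this
  refine map_extObs_eq G ord _ _ hlen (fun k hkk => ?_)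
  exact (hsub i k hkk π hπ ⟨hσ, h⟩).2

theorem ext_hierObs (hlin : IsLinearOrder (Fin n) ord) : (G.extG ord).HierObs := by
  haveI := hlin
  refine ⟨ord, hlin, ?_⟩
  intro i j hij v v' h
  rw [extG_obs, extG_obs] at h ⊢
  funext k
  by_cases hjk : ord j k
  · have hik : ord i k := trans_of ord hij hjk
    have hk := congrFun h k
    simp only [extObs, if_pos hik, Option.some.injEq] at hk
    simp [extObs, if_pos hjk, hk]
  · simp [extObs, hjk]

theorem proj_playPrefix (f : ℕ → V × Unit) (t : ℕ) :
    (playPrefix f t).map Prod.fst = playPrefix (fun u => (f u).1) t := by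
  simp [playPrefix, List.map_map]

theorem lift_playPrefix (f : ℕ → V) (t : ℕ) :
    liftL (playPrefix f t) = playPrefix (fun u => (f u, ())) t := by
  simp [playPrefix, liftL, List.map_map]

theorem ext_winning_of_winning (hlin : IsLinearOrder (Fin n) ord) {W : Set (ℕ → V)}
    {s : ∀ i, List V → A i} (hs : G.WinningProfile W s) :
    (G.extG ord).WinningProfile {f : ℕ → V × Unit | (fun t => (f t).1) ∈ W}
      (fun i π' => s i (π'.map Prod.fst)) := by
  haveI := hlin
  obtain ⟨hcons, hwin⟩ := hs
  constructor
  · intro i π' σ' hπ' hσ' hind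
    exact hcons i _ _ ((ext_isHistory_iff G ord π').mp hπ')
      ((ext_isHistory_iff G ord σ').mp hσ')
      (ext_indist_proj G ord (refl_of ord i) hind)
  · rintro f ⟨h0, hmov⟩
    refine hwin (fun t => (f t).1) ⟨by show (f 0).1 = G.init; rw [h0]; rfl, ?_⟩
    intro t
    obtain ⟨a, ha, has⟩ := hmov t
    refine ⟨a, ha, fun i => ?_⟩
    rw [has i]
    show s i ((playPrefix f t).map Prod.fst) = _
    rw [proj_playPrefix]

theorem winning_of_ext_winning
    (hsub : ∀ i j : Fin n, ord i j → ∀ π, G.IsHistory π → G.InfoSet i π ⊆ G.InfoSet j π)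
    {W : Set (ℕ → V)} {s' : ∀ i, List (V × Unit) → A i}
    (hs' : (G.extG ord).WinningProfile {f : ℕ → V × Unit | (fun t => (f t).1) ∈ W} s') :
    G.WinningProfile W (fun i π => s' i (liftL π)) := by
  obtain ⟨hcons, hwin⟩ := hs'
  constructor
  · intro i π σ hπ hσ hind
    refine hcons i _ _ ?_ ?_ (ext_indist_lift G ord hsub hπ hσ hind)
    · rw [ext_isHistory_iff, proj_liftL]; exact hπ
    · rw [ext_isHistory_iff, proj_liftL]; exact hσ
  · rintro f ⟨h0, hmov⟩
    have hf' : (G.extG ord).Follows s' (fun t => (f t, ())) := by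
      refine ⟨by show (f 0, ()) = _; rw [extG_init, h0], ?_⟩
      intro t
      obtain ⟨a, ha, has⟩ := hmov t
      refine ⟨a, ha, fun i => ?_⟩
      rw [has i]
      show s' i (liftL (playPrefix f t)) = _
      rw [lift_playPrefix]
    exact hwin _ hf'

/-- Translating a finite-state strategy machine to the expanded game. -/
def mooreProj (i : Fin n) (mc : Moore (B i) (A i)) :
    Moore (∀ k : Fin n, Option (B k)) (A i) where
  Q := mc.Q
  finQ := mc.finQ
  q0 := mc.q0
  δ q b := (b i).elim q (mc.δ q)
  out := mc.out

theorem mooreProj_output {i : Fin n} (hrefl : ord i i) (mc : Moore (B i) (A i)) (π : List V) :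
    (mooreProj i mc).output ((G.extG ord).obsSeq i (liftL π)) = mc.output (G.obsSeq i π) := by
  unfold Moore.output
  rw [ext_obsSeq_lift]
  show mc.out (List.foldl (fun q b => (b i).elim q (mc.δ q)) mc.q0
      ((π.drop 1).map (G.extObs ord i)))
    = mc.out (List.foldl mc.δ mc.q0 ((π.drop 1).map (G.obs i)))
  rw [List.foldl_map, List.foldl_map]
  have h : (fun (x : mc.Q) (y : V) => ((G.extObs ord i y) i).elim x (mc.δ x))
      = fun x y => mc.δ x (G.obs i y) := by
    funext x y
    simp [extObs, hrefl]
  rw [h]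

/-- The observation letter of player `i` in the expanded game, reconstructed from
a belief set. -/
def letter (i : Fin n) (S : Set V) : ∀ k : Fin n, Option (B k) :=
  fun k => if h : ord i k ∧ S.Nonempty then some (G.obs k h.2.choose) else none

theorem letter_reach
    (hsub : ∀ i j : Fin n, ord i j → ∀ π, G.IsHistory π → G.InfoSet i π ⊆ G.InfoSet j π)
    {i : Fin n} {π : List V} {v : V}
    (hπ : G.IsHistory π) (hv : π.getLast? = some v) (hne : G.obsSeq i π ≠ []) :
    G.letter ord i (G.reach i (G.obsSeq i π)) = G.extObs ord i v := by
  funext k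
  by_cases hkk : ord i k
  · have hvmem : v ∈ G.reach i (G.obsSeq i π) := ⟨π, hπ, rfl, hv⟩
    have hnonempty : (G.reach i (G.obsSeq i π)).Nonempty := ⟨v, hvmem⟩
    rw [letter, dif_pos ⟨hkk, hnonempty⟩, extObs, if_pos hkk]
    exact congrArg some (reach_obs hsub hkk hπ hv hne hnonempty.choose_spec)
  · rw [letter, dif_neg (fun h => hkk h.1), extObs, if_neg hkk]

/-- Translating a finite-state strategy machine back from the expanded game:
product with the belief-subset automaton. -/
def mooreLift [Fintype V] (i : Fin n) (mc : Moore (∀ k : Fin n, Option (B k)) (A i)) :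
    Moore (B i) (A i) where
  Q := Set V × mc.Q
  finQ := by
    haveI := mc.finQ
    infer_instance
  q0 := ({G.init}, mc.q0)
  δ p b := (G.upd i p.1 b, mc.δ p.2 (G.letter ord i (G.upd i p.1 b)))
  out p := mc.out p.2

theorem mooreLift_run [Fintype V]
    (hsub : ∀ i j : Fin n, ord i j → ∀ π, G.IsHistory π → G.InfoSet i π ⊆ G.InfoSet j π)
    (i : Fin n) (mc : Moore (∀ k : Fin n, Option (B k)) (A i)) :
    ∀ π : List V, G.IsHistory π →
      (G.obsSeq i π).foldl (G.mooreLift ord i mc).δ (G.mooreLift ord i mc).q0 =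
        (G.reach i (G.obsSeq i π),
          ((G.extG ord).obsSeq i (liftL π)).foldl mc.δ mc.q0) := by
  intro π
  induction π using List.reverseRecOn with
  | nil => intro h; exact absurd rfl (isHistory_ne_nil h)
  | append_singleton π₀ v ih =>
    intro h
    rcases isHistory_concat.mp h with ⟨rfl, rfl⟩ | ⟨h₀, u, hu, hstep⟩
    · have e1 : G.obsSeq i ([] ++ [G.init]) = [] := by simp [obsSeq]
      have e2 : (G.extG ord).obsSeq i (liftL ([] ++ [G.init])) = [] := by
        simp [liftL, obsSeq]
      rw [e1, e2]
      simp [mooreLift, reach_nil]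
    · have hne₀ : π₀ ≠ [] := isHistory_ne_nil h₀
      have hobs : G.obsSeq i (π₀ ++ [v]) = G.obsSeq i π₀ ++ [G.obs i v] :=
        obsSeq_concat i hne₀ v
      have hobs' : (G.extG ord).obsSeq i (liftL (π₀ ++ [v]))
          = (G.extG ord).obsSeq i (liftL π₀) ++ [G.extObs ord i v] := by
        rw [liftL_concat, obsSeq_concat i (liftL_ne_nil hne₀), extG_obs]
      have e1 : G.upd i (G.reach i (G.obsSeq i π₀)) (G.obs i v)
          = G.reach i (G.obsSeq i (π₀ ++ [v])) := by
        rw [hobs, reach_concat]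
      have e2 : G.letter ord i (G.reach i (G.obsSeq i (π₀ ++ [v]))) = G.extObs ord i v := by
        refine letter_reach G ord hsub h (by rw [List.getLast?_concat]) ?_
        rw [hobs]
        simp
      rw [hobs, hobs', List.foldl_append, List.foldl_append, ih h₀]
      simp only [List.foldl_cons, List.foldl_nil]
      show (G.upd i _ _, mc.δ _ (G.letter ord i (G.upd i _ _))) = _
      rw [e1, e2, hobs]

theorem mooreLift_output [Fintype V]
    (hsub : ∀ i j : Fin n, ord i j → ∀ π, G.IsHistory π → G.InfoSet i π ⊆ G.InfoSet j π)
    (i : Fin n) (mc : Moore (∀ k : Fin n, Option (B k)) (A i))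
    {π : List V} (hπ : G.IsHistory π) :
    (G.mooreLift ord i mc).output (G.obsSeq i π)
      = mc.output ((G.extG ord).obsSeq i (liftL π)) := by
  unfold Moore.output
  rw [mooreLift_run G ord hsub i mc π hπ]
  rfl

end Ext

end Construction

end GameGraph

/-- Every finite game graph `G` with static hierarchical information can be
expanded into a game graph `G'` over positions `V × M` (`M` finite, same players and action
sets, enlarged observation alphabets) that yields hierarchical observation such that, for the
winning condition `W'` induced on the `V`-components by any winning condition `W`, the
existence of (finite-state) distributed winning strategies is preserved in both directions. -/
theorem statement1 {n : ℕ} {V : Type} {A B : Fin n → Type}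
    [Fintype V] [∀ i, Fintype (A i)] [∀ i, Fintype (B i)]
    (G : GameGraph n V A B) (hG : G.StaticHI) (W : Set (ℕ → V)) :
    ∃ (M : Type) (_ : Fintype M) (B' : Fin n → Type) (_ : ∀ i, Fintype (B' i))
      (G' : GameGraph n (V × M) A B'),
      G'.HierObs ∧
      (G.HasDWS W ↔ G'.HasDWS { f : ℕ → V × M | (fun t => (f t).1) ∈ W }) ∧
      (G.HasFinDWS W ↔ G'.HasFinDWS { f : ℕ → V × M | (fun t => (f t).1) ∈ W }) := by
  obtain ⟨ord, hlin, hsub⟩ := hG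
  haveI := hlin
  refine ⟨Unit, inferInstance, fun _ => ∀ k : Fin n, Option (B k), fun _ => inferInstance,
    G.extG ord, GameGraph.ext_hierObs G ord hlin, ?_, ?_⟩
  · constructor
    · rintro ⟨s, hs⟩
      exact ⟨_, GameGraph.ext_winning_of_winning G ord hlin hs⟩
    · rintro ⟨s', hs'⟩
      exact ⟨_, GameGraph.winning_of_ext_winning G ord hsub hs'⟩
  · constructor
    · rintro ⟨s, hs, hfin⟩
      refine ⟨_, GameGraph.ext_winning_of_winning G ord hlin hs, fun i => ?_⟩
      obtain ⟨mc, hmc⟩ := hfin i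
      refine ⟨GameGraph.mooreProj i mc, fun π' hπ' => ?_⟩
      have hist : G.IsHistory (π'.map Prod.fst) :=
        (GameGraph.ext_isHistory_iff G ord π').mp hπ'
      show s i (List.map Prod.fst π') = _
      rw [hmc _ hist, ← GameGraph.mooreProj_output G ord (refl_of ord i) mc,
        GameGraph.liftL_proj]
    · rintro ⟨s', hs', hfin⟩
      refine ⟨_, GameGraph.winning_of_ext_winning G ord hsub hs', fun i => ?_⟩
      obtain ⟨mc, hmc⟩ := hfin i
      refine ⟨G.mooreLift ord i mc, fun π hπ => ?_⟩
      have hlift : (G.extG ord).IsHistory (GameGraph.liftL π) := by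
        rw [GameGraph.ext_isHistory_iff, GameGraph.proj_liftL]; exact hπ
      show s' i (GameGraph.liftL π) = _
      rw [hmc _ hlift, GameGraph.mooreLift_output G ord hsub i mc hπ]
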